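/- Let X_1, X_2, ... be i.i.d. Bernoulli(p) random variables with p < α, S_n = Σ_{i≤n} X_i. Then almost surely there exists n such that (n+1) · C(n, S_n) α^{S_n} (1-α)^{n-S_n} ≤ ε, for any fixed ε ∈ (0,1) and α ∈ (0,1). -/

import Mathlib

open MeasureTheory ProbabilityTheory

/-- The binomial probability mass function `b(n,p,x) = C(n,x) p^x (1-p)^(n-x)`. -/
noncomputable def binomPMF (n : ℕ) (p : ℝ) (x : ℕ) : ℝ :=
  (n.choose x : ℝ) * p ^ x * (1 - p) ^ (n - x)

open Filter Finset Topology in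
/-- Existence of `l > 1` with `l^c (1-α+α/l) < 1` when `c < α < 1`. -/
theorem csm_lemA {c α : ℝ} (hca : c < α) (hα1 : α < 1) :
    ∃ l : ℝ, 1 < l ∧ l ^ c * (1 - α + α / l) < 1 := by
  set g : ℝ → ℝ := fun x => x ^ c * (1 - α + α / x) with hg
  have h1 : HasDerivAt (fun x : ℝ => x ^ c) (c * (1:ℝ) ^ (c - 1)) 1 :=
    Real.hasDerivAt_rpow_const (Or.inl one_ne_zero)
  have h2 : HasDerivAt (fun x : ℝ => 1 - α + α / x) (α * (-(1 / (1:ℝ) ^ 2))) 1 := by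
    have := (hasDerivAt_inv (one_ne_zero : (1:ℝ) ≠ 0)).const_mul α
    simpa [div_eq_mul_inv] using this.const_add (1 - α)
  have hD : HasDerivAt g (c - α) 1 := by
    have h3 := h1.mul h2
    have hE : c * (1:ℝ) ^ (c - 1) * (1 - α + α / 1) + (1:ℝ) ^ c * (α * -(1 / (1:ℝ) ^ 2))
        = c - α := by
      rw [Real.one_rpow, Real.one_rpow]; ring
    rw [hE] at h3; exact h3
  have hslope := hasDerivAt_iff_tendsto_slope.1 hD
  have hneg : ∀ᶠ x in nhdsWithin 1 {(1:ℝ)}ᶜ, slope g 1 x < 0 :=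
    hslope.eventually (eventually_lt_nhds (by linarith : c - α < 0))
  have hle : nhdsWithin (1:ℝ) (Set.Ioi 1) ≤ nhdsWithin 1 {(1:ℝ)}ᶜ :=
    nhdsWithin_mono _ (fun x hx => ne_of_gt hx)
  have hneg' : ∀ᶠ x in nhdsWithin (1:ℝ) (Set.Ioi 1), slope g 1 x < 0 := hle hneg
  have hmem : ∀ᶠ x in nhdsWithin (1:ℝ) (Set.Ioi 1), (1:ℝ) < x :=
    eventually_mem_nhdsWithin
  obtain ⟨x, hx1, hx2⟩ := (hneg'.and hmem).exists
  refine ⟨x, hx2, ?_⟩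
  have hg1 : g 1 = 1 := by simp [hg]
  have hsl : (g x - g 1) / (x - 1) < 0 := by
    simpa [slope_def_field, div_eq_mul_inv] using hx1
  have hx0 : 0 < x - 1 := by linarith
  have h4 : g x - g 1 < 0 := by
    rcases div_neg_iff.1 hsl with ⟨a, b⟩ | ⟨a, b⟩
    · linarith
    · exact a
  show g x < 1
  linarith

open Finset in
/-- Chernoff-type bound on the binomial pmf at a point `k ≤ cn`. -/
theorem csm_lemB {α c l : ℝ} (hα0 : 0 < α) (hα1 : α < 1) (hl : 1 < l)
    {n k : ℕ} (hk : (k : ℝ) ≤ c * n) :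
    binomPMF n α k ≤ (l ^ c * (1 - α + α / l)) ^ n := by
  have hl0 : (0:ℝ) < l := by linarith
  have hq0 : (0:ℝ) < α / l := div_pos hα0 hl0
  have h1α : (0:ℝ) ≤ 1 - α := by linarith
  have hρ0 : (0:ℝ) ≤ l ^ c * (1 - α + α / l) :=
    mul_nonneg (Real.rpow_nonneg hl0.le c) (by linarith)
  by_cases hkn : k ≤ n
  · have step3 : (n.choose k : ℝ) * (α / l) ^ k * (1 - α) ^ (n - k)
        ≤ (α / l + (1 - α)) ^ n := by
      rw [add_pow]
      refine Finset.single_le_sum (f := fun j => (α/l) ^ j * (1-α) ^ (n-j) * (n.choose j : ℝ))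
        (fun j _ => mul_nonneg (mul_nonneg (pow_nonneg hq0.le _) (pow_nonneg h1α _))
          (Nat.cast_nonneg _))
        (Finset.mem_range.2 (Nat.lt_succ_of_le hkn)) |>.trans_eq' ?_
      ring
    have hb0 : (0:ℝ) ≤ (n.choose k : ℝ) * α ^ k * (1 - α) ^ (n - k) :=
      mul_nonneg (mul_nonneg (Nat.cast_nonneg _) (pow_nonneg hα0.le _)) (pow_nonneg h1α _)
    have step1 : binomPMF n α k
        ≤ l ^ (c * n - k) * ((n.choose k : ℝ) * α ^ k * (1 - α) ^ (n - k)) := by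
      have h1 : (1:ℝ) ≤ l ^ (c * n - k) :=
        Real.one_le_rpow hl.le (by linarith)
      exact le_mul_of_one_le_left hb0 h1
    have key : l ^ (c * n - k) * ((n.choose k : ℝ) * α ^ k * (1 - α) ^ (n - k))
        = (l ^ c) ^ (n:ℕ) * ((n.choose k : ℝ) * (α / l) ^ k * (1 - α) ^ (n - k)) := by
      rw [Real.rpow_sub hl0, Real.rpow_natCast l k, ← Real.rpow_natCast (l ^ c) n,
        ← Real.rpow_mul hl0.le, div_pow]
      have : (l:ℝ) ^ k ≠ 0 := pow_ne_zero k hl0.ne'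
      field_simp
    calc binomPMF n α k ≤ _ := step1
      _ = _ := key
      _ ≤ (l ^ c) ^ n * (α / l + (1 - α)) ^ n :=
          mul_le_mul_of_nonneg_left step3 (pow_nonneg (Real.rpow_nonneg hl0.le c) n)
      _ = (l ^ c * (1 - α + α / l)) ^ n := by rw [← mul_pow]; congr 1; ring
  · have h0 : n.choose k = 0 := Nat.choose_eq_zero_of_lt (by omega)
    have : binomPMF n α k = 0 := by simp [binomPMF, h0]
    rw [this]
    exact pow_nonneg hρ0 n

open Filter Finset Topology in
/-- Strong law of large numbers for the Bernoulli variables in the statement. -/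
theorem csm_slln
    (Ω : Type*) [MeasureSpace Ω] [IsProbabilityMeasure (ℙ : Measure Ω)]
    (p : ℝ) (hp : p ∈ Set.Ioo (0:ℝ) 1)
    (X : ℕ → Ω → ℕ)
    (hmeas : ∀ i, Measurable (X i))
    (hindep : iIndepFun X ℙ)
    (hval : ∀ i ω, X i ω ≤ 1)
    (hdist : ∀ i, ℙ {ω | X i ω = 1} = ENNReal.ofReal p) :
    ∀ᵐ ω ∂(ℙ : Measure Ω), Tendsto
      (fun n : ℕ => (∑ i ∈ Finset.range n, (X i ω : ℝ)) / n) atTop (𝓝 p) := by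
  set Y : ℕ → Ω → ℝ := fun i ω => (X i ω : ℝ) with hY
  have hmY : ∀ i, Measurable (Y i) := fun i => measurable_from_top.comp (hmeas i)
  have hsing : ∀ i, MeasurableSet {ω | X i ω = 1} := fun i =>
    (hmeas i) (measurableSet_singleton 1)
  have hmap : ∀ i, Measure.map (X i) ℙ = Measure.map (X 0) ℙ := by
    intro i
    refine Measure.ext_of_singleton (fun k => ?_)
    rw [Measure.map_apply (hmeas i) (measurableSet_singleton k),
      Measure.map_apply (hmeas 0) (measurableSet_singleton k)]
    match k with
    | 0 =>
      have e : ∀ j, X j ⁻¹' {0} = {ω | X j ω = 1}ᶜ := by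
        intro j; ext ω; have := hval j ω; simp; omega
      rw [e i, e 0, measure_compl (hsing i) (measure_ne_top _ _),
        measure_compl (hsing 0) (measure_ne_top _ _), hdist i, hdist 0]
    | 1 =>
      have e : ∀ j, X j ⁻¹' {1} = {ω | X j ω = 1} := by intro j; ext ω; simp
      rw [e i, e 0, hdist i, hdist 0]
    | (k+2) =>
      have e : ∀ j, X j ⁻¹' {k+2} = ∅ := by
        intro j; ext ω; have := hval j ω; simp; omega
      rw [e i, e 0]
  have hident : ∀ i, IdentDistrib (Y i) (Y 0) ℙ ℙ := by
    intro i
    have hid : IdentDistrib (X i) (X 0) ℙ ℙ :=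
      ⟨(hmeas i).aemeasurable, (hmeas 0).aemeasurable, hmap i⟩
    exact hid.comp measurable_from_top
  have hint : Integrable (Y 0) ℙ := by
    refine ⟨(hmY 0).aestronglyMeasurable, ?_⟩
    refine HasFiniteIntegral.mono' (hasFiniteIntegral_const (1:ℝ)) ?_
    filter_upwards with ω
    have := hval 0 ω
    simp only [hY, Real.norm_natCast]
    exact_mod_cast this
  have hpind : Pairwise (Function.onFun (IndepFun · · (ℙ : Measure Ω)) Y) := by
    intro i j hij
    exact (hindep.indepFun hij).comp measurable_from_top measurable_from_top
  have hEY : (ℙ : Measure Ω)[Y 0] = p := by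
    have hYind : Y 0 = Set.indicator {ω | X 0 ω = 1} (fun _ => (1:ℝ)) := by
      funext ω
      have := hval 0 ω
      by_cases h : X 0 ω = 1
      · simp [hY, h, Set.indicator_of_mem, Set.mem_setOf_eq]
      · have h0 : X 0 ω = 0 := by omega
        simp [hY, h0, Set.indicator_of_notMem, h, Set.mem_setOf_eq]
    rw [hYind, integral_indicator_const (1:ℝ) (hsing 0), measureReal_def, hdist 0, smul_eq_mul, mul_one,
      ENNReal.toReal_ofReal hp.1.le]
  have := strong_law_ae_real Y hint hpind hident
  rw [hEY] at this
  exact this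

open Filter Finset Topology in
/-- If `p < α`, then almost surely some `n` satisfies `(n+1) b(n,α,S_n) ≤ ε`, i.e. the
CSM stopping time is finite almost surely. -/
theorem stmt8
    (Ω : Type*) [MeasureSpace Ω] [IsProbabilityMeasure (ℙ : Measure Ω)]
    (p α ε : ℝ) (hp : p ∈ Set.Ioo (0:ℝ) 1) (hα : α ∈ Set.Ioo (0:ℝ) 1)
    (hpα : p < α) (hε : ε ∈ Set.Ioo (0:ℝ) 1)
    (X : ℕ → Ω → ℕ)
    (hmeas : ∀ i, Measurable (X i))
    (hindep : iIndepFun X ℙ)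
    (hval : ∀ i ω, X i ω ≤ 1)
    (hdist : ∀ i, ℙ {ω | X i ω = 1} = ENNReal.ofReal p) :
    ℙ {ω | ∃ n : ℕ, 1 ≤ n ∧
        ((n : ℝ) + 1) * binomPMF n α (∑ i ∈ Finset.range n, X i ω) ≤ ε} = 1 := by
  set c : ℝ := (p + α) / 2 with hc
  have hcα : c < α := by rw [hc]; linarith
  have hpc : p < c := by rw [hc]; linarith
  obtain ⟨l, hl1, hρ1⟩ := csm_lemA hcα hα.2
  set ρ : ℝ := l ^ c * (1 - α + α / l) with hρ
  have hl0 : (0:ℝ) < l := by linarith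
  have hρ0 : (0:ℝ) ≤ ρ := mul_nonneg (Real.rpow_nonneg hl0.le c)
    (by have : 0 < α / l := div_pos hα.1 hl0; linarith [hα.2])
  -- (n+1) ρ^n → 0
  have htends : Tendsto (fun n : ℕ => ((n:ℝ) + 1) * ρ ^ n) atTop (𝓝 0) := by
    have h1 : Tendsto (fun n : ℕ => (n:ℝ) * ρ ^ n) atTop (𝓝 0) := by
      have := summable_pow_mul_geometric_of_norm_lt_one 1
        (r := ρ) (by rwa [Real.norm_eq_abs, abs_of_nonneg hρ0])
      simpa [pow_one] using this.tendsto_atTop_zero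
    have h2 : Tendsto (fun n : ℕ => ρ ^ n) atTop (𝓝 0) :=
      tendsto_pow_atTop_nhds_zero_of_lt_one hρ0 hρ1
    have := h1.add h2
    simpa [add_mul, one_mul] using this
  have hev : ∀ᶠ n : ℕ in atTop, ((n:ℝ) + 1) * ρ ^ n ≤ ε :=
    (htends.eventually (eventually_le_nhds hε.1)).mono (fun n hn => hn)
  -- the a.s. part
  have hae := csm_slln Ω p hp X hmeas hindep hval hdist
  set s : Set Ω := {ω | ∃ n : ℕ, 1 ≤ n ∧
      ((n : ℝ) + 1) * binomPMF n α (∑ i ∈ Finset.range n, X i ω) ≤ ε} with hs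
  have haes : ∀ᵐ ω ∂(ℙ : Measure Ω), ω ∈ s := by
    filter_upwards [hae] with ω hω
    have hevc : ∀ᶠ n : ℕ in atTop,
        (∑ i ∈ Finset.range n, (X i ω : ℝ)) / n < c :=
      hω.eventually (eventually_lt_nhds hpc)
    obtain ⟨n, hn1, hn2, hn3⟩ := ((eventually_ge_atTop 1).and (hevc.and hev)).exists
    refine ⟨n, hn1, ?_⟩
    have hn0 : (0:ℝ) < n := by exact_mod_cast hn1
    have hSc : ((∑ i ∈ Finset.range n, X i ω : ℕ) : ℝ) ≤ c * n := by
      push_cast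
      have := (div_lt_iff₀ hn0).1 hn2
      linarith
    have hb := csm_lemB hα.1 hα.2 hl1 hSc
    have hmul : ((n:ℝ) + 1) * binomPMF n α (∑ i ∈ Finset.range n, X i ω)
        ≤ ((n:ℝ) + 1) * ρ ^ n := by
      apply mul_le_mul_of_nonneg_left hb (by positivity)
    linarith
  have h0 : ℙ sᶜ = 0 := by
    have := MeasureTheory.ae_iff.1 haes
    exact this
  refine le_antisymm prob_le_one ?_
  have hun := measure_union_le (μ := (ℙ : Measure Ω)) s sᶜ
  rw [Set.union_compl_self, measure_univ, h0, add_zero] at hun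
  exact hun
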